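/- Let R be a domain, I an ideal of R, and f ∈ I a nonzero element. Then R = Γ(R,I) if and only if Rf = (Rf : I^∞). -/

import Mathlib

noncomputable section

def locAt (R K : Type) [CommRing R] [Field K] [Algebra R K] (r : R) : Subring K :=
  (Algebra.adjoin R {(algebraMap R K r)⁻¹}).toSubring

def Gamma (R K : Type) [CommRing R] [Field K] [Algebra R K] (I : Ideal R) : Set K :=
  ⋂ (r : R) (_ : r ∈ I) (_ : r ≠ 0), (locAt R K r : Set K)

def satur (R : Type) [CommRing R] (I : Ideal R) (f : R) : Set R :=
  {r : R | ∀ g ∈ I, ∃ n : ℕ, r * g ^ n ∈ Ideal.span {f}}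

lemma mem_locAt_iff (R K : Type) [CommRing R] [Field K] [Algebra R K]
    (g : R) (hg : algebraMap R K g ≠ 0) (x : K) :
    x ∈ locAt R K g ↔ ∃ (n : ℕ) (a : R), x * (algebraMap R K g) ^ n = algebraMap R K a := by
  constructor
  · intro hx
    have hx' : x ∈ Algebra.adjoin R {(algebraMap R K g)⁻¹} := hx
    clear hx
    induction hx' using Algebra.adjoin_induction with
    | mem y hy =>
      rcases hy with rfl
      exact ⟨1, 1, by simp [inv_mul_cancel₀ hg]⟩
    | algebraMap a => exact ⟨0, a, by simp⟩
    | add y z _ _ hy hz =>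
      obtain ⟨n, a, ha⟩ := hy
      obtain ⟨m, b, hb⟩ := hz
      refine ⟨n + m, a * g ^ m + b * g ^ n, ?_⟩
      rw [map_add, map_mul, map_mul, map_pow, map_pow, pow_add]
      linear_combination (algebraMap R K) g ^ m * ha + (algebraMap R K) g ^ n * hb
    | mul y z _ _ hy hz =>
      obtain ⟨n, a, ha⟩ := hy
      obtain ⟨m, b, hb⟩ := hz
      refine ⟨n + m, a * b, ?_⟩
      rw [map_mul, ← ha, ← hb, pow_add]; ring
  · rintro ⟨n, a, ha⟩
    have hx : x = algebraMap R K a * ((algebraMap R K g)⁻¹) ^ n := by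
      field_simp
      rw [one_div, inv_pow, eq_mul_inv_iff_mul_eq₀ (pow_ne_zero n hg)]; exact ha
    rw [hx]
    show _ ∈ (Algebra.adjoin R {(algebraMap R K g)⁻¹}).toSubring
    rw [Subalgebra.mem_toSubring]
    set S : Subalgebra R K := Algebra.adjoin R {(algebraMap R K g)⁻¹} with hS
    have h2 : ((algebraMap R K g)⁻¹) ∈ S := by
      rw [hS]; exact Algebra.subset_adjoin rfl
    exact S.mul_mem (S.algebraMap_mem a) (S.toSubsemiring.pow_mem h2 n)

/-- For a nonzero `f ∈ I`: `R = Γ(R,I)` if and only if `Rf = (Rf : I^∞)`. -/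
theorem gamma_eq_self_iff_saturated (R K : Type) [CommRing R] [IsDomain R] [Field K] [Algebra R K]
    [IsFractionRing R K] (I : Ideal R) (f : R) (hfI : f ∈ I) (hf : f ≠ 0) :
    Gamma R K I = Set.range (algebraMap R K) ↔ (Ideal.span {f} : Set R) = satur R I f := by
  have hinj : Function.Injective (algebraMap R K) := IsFractionRing.injective R K
  have hne : ∀ g : R, g ≠ 0 → algebraMap R K g ≠ 0 := fun g hg h =>
    hg (hinj (by simpa using h))
  constructor
  · intro hG
    apply Set.Subset.antisymm
    · intro r hr g hgI
      exact ⟨0, by simpa using hr⟩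
    · intro r hr
      set x : K := algebraMap R K r * (algebraMap R K f)⁻¹ with hx
      have hxG : x ∈ Gamma R K I := by
        simp only [Gamma, Set.mem_iInter]
        intro g hgI hg
        obtain ⟨n, hn⟩ := hr g hgI
        rw [Ideal.mem_span_singleton] at hn
        obtain ⟨c, hc⟩ := hn
        rw [SetLike.mem_coe, mem_locAt_iff R K g (hne g hg)]
        refine ⟨n, c, ?_⟩
        have h1 : algebraMap R K (r * g ^ n) = algebraMap R K (f * c) := by rw [hc]
        rw [map_mul, map_pow, map_mul] at h1
        rw [hx]
        field_simp [hne f hf]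
        linear_combination h1
      rw [hG] at hxG
      obtain ⟨s, hs⟩ := hxG
      rw [SetLike.mem_coe, Ideal.mem_span_singleton]
      refine ⟨s, hinj ?_⟩
      rw [map_mul, hs, hx, ← mul_assoc, mul_comm ((algebraMap R K) f) ((algebraMap R K) r),
        mul_assoc, mul_inv_cancel₀ (hne f hf), mul_one]
  · intro hS
    apply Set.Subset.antisymm
    · intro x hxG
      simp only [Gamma, Set.mem_iInter] at hxG
      have hxf := hxG f hfI hf
      rw [SetLike.mem_coe, mem_locAt_iff R K f (hne f hf)] at hxf
      obtain ⟨n, a, ha⟩ := hxf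
      induction n generalizing a with
      | zero => exact ⟨a, by simpa using ha.symm⟩
      | succ n ih =>
        have hsat : a ∈ satur R I f := by
          intro g hgI
          by_cases hg : g = 0
          · exact ⟨1, by simp [hg]⟩
          · have hxg := hxG g hgI hg
            rw [SetLike.mem_coe, mem_locAt_iff R K g (hne g hg)] at hxg
            obtain ⟨m, b, hb⟩ := hxg
            refine ⟨m, ?_⟩
            rw [Ideal.mem_span_singleton]
            refine ⟨b * f ^ n, hinj ?_⟩
            have h2 : algebraMap R K (a * g ^ m) = algebraMap R K (b * f ^ (n + 1)) := by
              rw [map_mul, map_pow, map_mul, map_pow, ← ha, ← hb]; ring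
            rw [h2, map_mul, map_mul, map_mul, map_pow, map_pow]
            ring
        rw [← hS, SetLike.mem_coe, Ideal.mem_span_singleton] at hsat
        obtain ⟨c, hc⟩ := hsat
        apply ih c
        have hfK := hne f hf
        have h3 : x * (algebraMap R K f) ^ (n + 1) = algebraMap R K c * algebraMap R K f := by
          rw [ha, hc, map_mul]; ring
        rw [pow_succ, ← mul_assoc] at h3
        exact mul_right_cancel₀ hfK h3
    · rintro x ⟨a, rfl⟩
      simp only [Gamma, Set.mem_iInter]
      intro g hgI hg
      exact Subalgebra.algebraMap_mem _ a
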